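/- Let x = (x_n), y = (y_n) ∈ ⊕_1 X_n with x ≠ 0. Then x is Birkhoff-James orthogonal to y if and only if there exist f_n ∈ J(x_n) for each n with x_n ≠ 0 such that |∑_{x_n ≠ 0} f_n(y_n)| ≤ ∑_{x_n = 0} ‖y_n‖. -/

import Mathlib

open scoped ENNReal

/-- Birkhoff-James orthogonality: `u ⊥_B v` iff `‖u + c • v‖ ≥ ‖u‖` for every scalar. -/
def BJOrth {X : Type*} [NormedAddCommGroup X] [NormedSpace ℝ X] (u v : X) : Prop :=
  ∀ c : ℝ, ‖u‖ ≤ ‖u + c • v‖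

open Filter Topology

set_option linter.unusedSectionVars false
set_option linter.unusedVariables false

namespace BJAux

variable {X : Type*} [NormedAddCommGroup X] [NormedSpace ℝ X]


noncomputable def q (u v : X) (t : ℝ) : ℝ := (‖u + t • v‖ - ‖u‖) / t

lemma abs_q_le (u v : X) {t : ℝ} (ht : t ≠ 0) : |q u v t| ≤ ‖v‖ := by
  have h : |‖u + t • v‖ - ‖u‖| ≤ ‖t • v‖ := by
    simpa using abs_norm_sub_norm_le (u + t • v) u
  rw [q, abs_div]
  rw [norm_smul, Real.norm_eq_abs] at h
  rw [div_le_iff₀ (abs_pos.mpr ht)]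
  linarith [h, mul_comm ‖v‖ |t|]

lemma q_mono_pos (u v : X) {s t : ℝ} (hs : 0 < s) (hst : s ≤ t) :
    q u v s ≤ q u v t := by
  have ht : 0 < t := lt_of_lt_of_le hs hst
  have hkey : ‖u + s • v‖ ≤ (1 - s / t) * ‖u‖ + (s / t) * ‖u + t • v‖ := by
    have hrepr : u + s • v = (1 - s / t) • u + (s / t) • (u + t • v) := by
      rw [smul_add, smul_smul, div_mul_cancel₀ _ ht.ne']
      module
    calc ‖u + s • v‖ = ‖(1 - s / t) • u + (s / t) • (u + t • v)‖ := by rw [hrepr]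
      _ ≤ ‖(1 - s / t) • u‖ + ‖(s / t) • (u + t • v)‖ := norm_add_le _ _
      _ = (1 - s / t) * ‖u‖ + (s / t) * ‖u + t • v‖ := by
          rw [norm_smul, norm_smul, Real.norm_eq_abs, Real.norm_eq_abs,
            abs_of_nonneg (by rw [sub_nonneg]; exact div_le_one_of_le₀ hst ht.le),
            abs_of_nonneg (by positivity)]
  rw [q, q, div_le_div_iff₀ hs ht]
  have h2 : t * ‖u + s • v‖ ≤ (t - s) * ‖u‖ + s * ‖u + t • v‖ := by
    have := mul_le_mul_of_nonneg_left hkey ht.le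
    calc t * ‖u + s • v‖ ≤ t * ((1 - s / t) * ‖u‖ + (s / t) * ‖u + t • v‖) := this
      _ = (t - s) * ‖u‖ + s * ‖u + t • v‖ := by field_simp
  nlinarith [h2]


lemma q_neg_arg (u v : X) (t : ℝ) : q u v (-t) = - q u (-v) t := by
  have : u + (-t) • v = u + t • (-v) := by module
  rw [q, q, this, div_neg]

lemma q_cross (u v : X) {s t : ℝ} (hs : s < 0) (ht : 0 < t) :
    q u v s ≤ q u v t := by
  have hts : 0 < t - s := by linarith
  have hkey : (t - s) * ‖u‖ ≤ t * ‖u + s • v‖ + (-s) * ‖u + t • v‖ := by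
    have hrepr : (t - s) • u = t • (u + s • v) + (-s) • (u + t • v) := by module
    calc (t - s) * ‖u‖ = ‖(t - s) • u‖ := by
          rw [norm_smul, Real.norm_eq_abs, abs_of_pos hts]
      _ = ‖t • (u + s • v) + (-s) • (u + t • v)‖ := by rw [hrepr]
      _ ≤ ‖t • (u + s • v)‖ + ‖(-s) • (u + t • v)‖ := norm_add_le _ _
      _ = t * ‖u + s • v‖ + (-s) * ‖u + t • v‖ := by
          rw [norm_smul, norm_smul, Real.norm_eq_abs, Real.norm_eq_abs,
            abs_of_pos ht, abs_of_pos (by linarith : (0:ℝ) < -s)]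
  rw [q, q, div_le_iff_of_neg hs, div_mul_eq_mul_div, div_le_iff₀ ht]
  nlinarith [hkey]


lemma kpos (k : ℕ) : (0:ℝ) < 1 / (k + 1) := by positivity

noncomputable def Dp (u v : X) : ℝ := ⨅ k : ℕ, q u v (1 / (k + 1))

noncomputable def Dm (u v : X) : ℝ := - Dp u (-v)

lemma bddBelow_q (u v : X) : BddBelow (Set.range fun k : ℕ => q u v (1 / (k + 1))) := by
  refine ⟨-‖v‖, ?_⟩
  rintro r ⟨k, rfl⟩
  exact neg_le_of_abs_le (abs_q_le u v (kpos k).ne')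

lemma antitone_q (u v : X) : Antitone (fun k : ℕ => q u v (1 / (k + 1))) := by
  intro k l hkl
  exact q_mono_pos u v (kpos l) (by
    apply div_le_div_of_nonneg_left (by norm_num) (by positivity)
    exact_mod_cast by omega)

lemma tendsto_Dp (u v : X) :
    Tendsto (fun k : ℕ => q u v (1 / (k + 1))) atTop (𝓝 (Dp u v)) :=
  tendsto_atTop_ciInf (antitone_q u v) (bddBelow_q u v)

lemma Dp_le_q_pos (u v : X) {t : ℝ} (ht : 0 < t) : Dp u v ≤ q u v t := by
  obtain ⟨k, hk⟩ := exists_nat_one_div_lt ht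
  refine ciInf_le_of_le (bddBelow_q u v) k ?_
  exact q_mono_pos u v (kpos k) (by exact_mod_cast hk.le)

lemma le_Dp (u v : X) {c : ℝ} (h : ∀ k : ℕ, c ≤ q u v (1 / (k + 1))) : c ≤ Dp u v :=
  le_ciInf h

lemma abs_Dp_le (u v : X) : |Dp u v| ≤ ‖v‖ := by
  refine abs_le.mpr ⟨le_Dp u v fun k => neg_le_of_abs_le (abs_q_le u v (kpos k).ne'), ?_⟩
  exact (Dp_le_q_pos u v one_pos).trans (le_of_abs_le (abs_q_le u v one_ne_zero))

lemma q_eq_neg (u v : X) (t : ℝ) : q u (-v) t = - q u v (-t) := by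
  rw [q_neg_arg]; ring

lemma Dm_le_q_pos (u v : X) {t : ℝ} (ht : 0 < t) : Dm u v ≤ q u v t := by
  rw [Dm, neg_le]
  refine le_Dp u (-v) fun k => ?_
  rw [q_eq_neg]
  exact neg_le_neg (q_cross u v (by simpa using (kpos k)) ht)

lemma q_neg_le_Dm (u v : X) {t : ℝ} (ht : t < 0) : q u v t ≤ Dm u v := by
  rw [Dm, le_neg]
  have := Dp_le_q_pos u (-v) (t := -t) (by linarith)
  rwa [q_eq_neg, neg_neg] at this

lemma Dm_le_Dp (u v : X) : Dm u v ≤ Dp u v :=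
  le_Dp u v fun k => Dm_le_q_pos u v (kpos k)

lemma abs_Dm_le (u v : X) : |Dm u v| ≤ ‖v‖ := by
  rw [Dm, abs_neg]
  simpa using abs_Dp_le u (-v)

lemma Dp_zero (v : X) : Dp (0:X) v = ‖v‖ := by
  have : (fun k : ℕ => q (0:X) v (1 / (k + 1))) = fun _ => ‖v‖ := by
    funext k
    rw [q, zero_add, norm_smul, norm_zero, sub_zero, Real.norm_eq_abs,
      abs_of_pos (kpos k)]
    field_simp
  rw [Dp, this, ciInf_const]

lemma Dm_zero (v : X) : Dm (0:X) v = -‖v‖ := by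
  rw [Dm, Dp_zero, norm_neg]

lemma norm_add_le_of_between (u v : X) {d : ℝ} (h1 : Dm u v ≤ d) (h2 : d ≤ Dp u v)
    (t : ℝ) : ‖u‖ + t * d ≤ ‖u + t • v‖ := by
  rcases lt_trichotomy t 0 with ht | ht | ht
  · have hq : q u v t ≤ d := (q_neg_le_Dm u v ht).trans h1
    have := mul_le_mul_of_nonpos_left hq (le_of_lt ht)
    rw [q, mul_div_cancel₀ _ (ne_of_lt ht)] at this
    linarith
  · simp [ht]
  · have hq : d ≤ q u v t := h2.trans (Dp_le_q_pos u v ht)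
    have := mul_le_mul_of_nonneg_left hq (le_of_lt ht)
    rw [q, mul_div_cancel₀ _ (ne_of_gt ht)] at this
    linarith



set_option maxHeartbeats 1000000 in
lemma exists_support (u v : X) (hu : u ≠ 0) (d : ℝ)
    (hd : ∀ t : ℝ, ‖u‖ + t * d ≤ ‖u + t • v‖) :
    ∃ f : X →L[ℝ] ℝ, ‖f‖ = 1 ∧ f u = ‖u‖ ∧ f v = d := by
  have habs : |d| ≤ ‖v‖ := by
    have h1 := hd 1
    have h2 := hd (-1)
    rw [one_smul, one_mul] at h1
    rw [neg_one_smul, neg_one_mul] at h2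
    have t1 : ‖u + v‖ ≤ ‖u‖ + ‖v‖ := norm_add_le _ _
    have t2 : ‖u + -v‖ ≤ ‖u‖ + ‖v‖ := (norm_add_le _ _).trans (by rw [norm_neg])
    rw [abs_le]; constructor <;> linarith
  set g : (ℝ × ℝ) →ₗ[ℝ] X :=
    { toFun := fun p => p.1 • u + p.2 • v
      map_add' := fun p q => by simp [add_smul]; abel
      map_smul' := fun c p => by simp [smul_smul] } with hg
  have hgapp : ∀ p : ℝ × ℝ, g p = p.1 • u + p.2 • v := fun _ => rfl
  set h : (ℝ × ℝ) →ₗ[ℝ] ℝ :=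
    { toFun := fun p => p.1 * ‖u‖ + p.2 * d
      map_add' := fun p q => by simp; ring
      map_smul' := fun c p => by simp; ring } with hh
  have hhapp : ∀ p : ℝ × ℝ, h p = p.1 * ‖u‖ + p.2 * d := fun _ => rfl
  -- key bound
  have hbound1 : ∀ p : ℝ × ℝ, h p ≤ ‖g p‖ := by
    rintro ⟨a, b⟩
    rw [hhapp, hgapp]
    rcases lt_trichotomy a 0 with ha | ha | ha
    · have hb : |b| * ‖v‖ = ‖b • v‖ := by rw [norm_smul, Real.norm_eq_abs]
      have htri : ‖b • v‖ ≤ ‖a • u + b • v‖ + ‖a • u‖ := by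
        have := norm_add_le (a • u + b • v) (-(a • u))
        simpa using this
      have hau : ‖a • u‖ = -a * ‖u‖ := by
        rw [norm_smul, Real.norm_eq_abs, abs_of_neg ha]
      have hbd : b * d ≤ |b| * ‖v‖ := by
        calc b * d ≤ |b * d| := le_abs_self _
          _ = |b| * |d| := abs_mul _ _
          _ ≤ |b| * ‖v‖ := mul_le_mul_of_nonneg_left habs (abs_nonneg _)
      linarith
    · subst ha
      simp only [zero_mul, zero_add, zero_smul]
      calc b * d ≤ |b| * |d| := by
            calc b * d ≤ |b * d| := le_abs_self _
              _ = |b| * |d| := abs_mul _ _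
        _ ≤ |b| * ‖v‖ := mul_le_mul_of_nonneg_left habs (abs_nonneg _)
        _ = ‖b • v‖ := by rw [norm_smul, Real.norm_eq_abs]
    · have := hd (b / a)
      have h2 := mul_le_mul_of_nonneg_left this ha.le
      rw [mul_add] at h2
      have e1 : a * (b / a * d) = b * d := by field_simp
      have e2 : a • (u + (b / a) • v) = a • u + b • v := by
        rw [smul_add, smul_smul, mul_div_cancel₀ _ ha.ne']
      have e3 : ‖a • u + b • v‖ = a * ‖u + (b / a) • v‖ := by
        rw [← e2, norm_smul, Real.norm_eq_abs, abs_of_pos ha]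
      rw [e1, ← e3] at h2
      linarith
  have hbound : ∀ p : ℝ × ℝ, |h p| ≤ ‖g p‖ := by
    intro p
    rw [abs_le]
    refine ⟨?_, hbound1 p⟩
    have := hbound1 (-p)
    rw [map_neg, map_neg, norm_neg] at this
    linarith
  have hker : LinearMap.ker g ≤ LinearMap.ker h := by
    intro p hp
    rw [LinearMap.mem_ker] at hp ⊢
    have := hbound p
    rw [hp, norm_zero] at this
    exact abs_nonpos_iff.mp this
  set f₀ : ((ℝ × ℝ) ⧸ LinearMap.ker g) →ₗ[ℝ] ℝ := Submodule.liftQ _ h hker with hf₀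
  set e := g.quotKerEquivRange with he
  set f₁ : LinearMap.range g →ₗ[ℝ] ℝ := f₀.comp e.symm.toLinearMap with hf₁
  have hf₁app : ∀ (p : ℝ × ℝ) (z : LinearMap.range g), g p = (z : X) → f₁ z = h p := by
    rintro p ⟨z, hz⟩ rfl
    have hmk : e (Submodule.Quotient.mk p) = (⟨g p, hz⟩ : LinearMap.range g) :=
      Subtype.ext (g.quotKerEquivRange_apply_mk p)
    rw [hf₁, LinearMap.comp_apply, LinearEquiv.coe_toLinearMap, ← hmk,
      LinearEquiv.symm_apply_apply, hf₀, Submodule.liftQ_apply]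
  have hf₁bound : ∀ z : LinearMap.range g, ‖f₁ z‖ ≤ 1 * ‖z‖ := by
    rintro ⟨z, hz⟩
    obtain ⟨p, rfl⟩ := hz
    rw [one_mul, hf₁app p ⟨g p, ⟨p, rfl⟩⟩ rfl, Real.norm_eq_abs]
    exact (hbound p).trans le_rfl
  set f₂ : LinearMap.range g →L[ℝ] ℝ := f₁.mkContinuous 1 hf₁bound with hf₂
  obtain ⟨F, hFext, hFnorm⟩ := exists_extension_norm_eq (LinearMap.range g) f₂
  have hFu : F u = ‖u‖ := by
    have h10 : g (1, 0) = u := by rw [hgapp]; simp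
    have := hFext ⟨u, ⟨(1, 0), h10⟩⟩
    rw [this, hf₂, LinearMap.mkContinuous_apply,
      hf₁app (1, 0) ⟨u, ⟨(1, 0), h10⟩⟩ h10, hhapp]
    norm_num
  have hFv : F v = d := by
    have h01 : g (0, 1) = v := by rw [hgapp]; simp
    have := hFext ⟨v, ⟨(0, 1), h01⟩⟩
    rw [this, hf₂, LinearMap.mkContinuous_apply,
      hf₁app (0, 1) ⟨v, ⟨(0, 1), h01⟩⟩ h01, hhapp]
    norm_num
  refine ⟨F, ?_, hFu, hFv⟩
  have hle : ‖F‖ ≤ 1 := hFnorm.le.trans (f₁.mkContinuous_norm_le zero_le_one hf₁bound)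
  have hge : 1 ≤ ‖F‖ := by
    have := F.le_opNorm u
    rw [hFu, Real.norm_eq_abs, abs_of_nonneg (norm_nonneg u)] at this
    have hu' : 0 < ‖u‖ := norm_pos_iff.mpr hu
    nlinarith
  linarith



variable {E : ℕ → Type*} [∀ n, NormedAddCommGroup (E n)] [∀ n, NormedSpace ℝ (E n)]



lemma summable_norm (z : lp E 1) : Summable fun n => ‖z n‖ := by
  have := (lp.memℓp z).summable (p := 1) (by norm_num)
  simpa using this

lemma norm_eq (z : lp E 1) : ‖z‖ = ∑' n, ‖z n‖ := by
  rw [lp.norm_eq_tsum_rpow (by norm_num) z]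
  simp

lemma tsum_split (g : ℕ → ℝ) (hg : Summable g) (P : ℕ → Prop) :
    ∑' n, g n = (∑' m : {n // P n}, g m) + ∑' m : {n // ¬ P n}, g m := by
  have h1 : Summable fun m : {n | P n} => g m := hg.subtype _
  have h2 : Summable fun m : ↥{n | P n}ᶜ => g m := hg.subtype _
  exact (Summable.tsum_add_tsum_compl h1 h2).symm

lemma tsum_not_ne (x : lp E 1) (F : ℕ → ℝ) :
    (∑' m : {n // ¬ (x n ≠ 0)}, F m) = ∑' m : {n // x n = 0}, F m :=
  Equiv.tsum_eq (Equiv.subtypeEquivRight fun n => not_not) (fun m : {n // x n = 0} => F m)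

lemma coords_add_smul (x y : lp E 1) (t : ℝ) (n : ℕ) :
    (x + t • y) n = x n + t • y n := by
  simp [lp.coeFn_add, lp.coeFn_smul]; rfl

lemma tsum_q_eq (x y : lp E 1) {t : ℝ} (ht : t ≠ 0) :
    ∑' n, q (x n) (y n) t = (‖x + t • y‖ - ‖x‖) / t := by
  have h1 : Summable fun n => ‖x n + t • y n‖ := by
    have := summable_norm (x + t • y)
    simpa only [coords_add_smul] using this
  have h2 : ‖x + t • y‖ = ∑' n, ‖x n + t • y n‖ := by
    rw [norm_eq]
    exact tsum_congr fun n => by rw [coords_add_smul]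
  calc ∑' n, q (x n) (y n) t = (∑' n, (‖x n + t • y n‖ - ‖x n‖)) / t := by
        rw [← tsum_div_const]
        exact tsum_congr fun n => rfl
      _ = (∑' n, ‖x n + t • y n‖ - ∑' n, ‖x n‖) / t := by
        rw [Summable.tsum_sub h1 (summable_norm x)]
      _ = (‖x + t • y‖ - ‖x‖) / t := by rw [h2, norm_eq x]

lemma summable_Dp (x y : lp E 1) : Summable fun n => Dp (x n) (y n) :=
  (summable_norm y).of_norm_bounded
    (fun n => by simpa [Real.norm_eq_abs] using abs_Dp_le (x n) (y n))

lemma summable_Dm (x y : lp E 1) : Summable fun n => Dm (x n) (y n) :=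
  (summable_norm y).of_norm_bounded
    (fun n => by simpa [Real.norm_eq_abs] using abs_Dm_le (x n) (y n))

lemma sum_Dp_nonneg (x y : lp E 1) (h : ∀ t : ℝ, 0 < t → ‖x‖ ≤ ‖x + t • y‖) :
    0 ≤ ∑' n, Dp (x n) (y n) := by
  have hmain : Tendsto (fun k : ℕ => ∑' n, q (x n) (y n) (1/(k+1))) atTop
      (𝓝 (∑' n, Dp (x n) (y n))) :=
    tendsto_tsum_of_dominated_convergence (summable_norm y)
      (fun n => tendsto_Dp (x n) (y n))
      (Eventually.of_forall fun k n => by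
        simpa [Real.norm_eq_abs] using abs_q_le (x n) (y n) (kpos k).ne')
  refine ge_of_tendsto' hmain fun k => ?_
  rw [tsum_q_eq x y (kpos k).ne']
  exact div_nonneg (sub_nonneg.mpr (h _ (kpos k))) (kpos k).le


end BJAux

open BJAux

/-- For a nonzero `x = (x_n)` and any `y = (y_n)` in ⊕_1 E_n, `x ⊥_B y` iff there exist
norm-one support functionals `f_n` of `x_n` (for the indices with `x_n ≠ 0`) such that
`|∑_{x_n ≠ 0} f_n(y_n)| ≤ ∑_{x_n = 0} ‖y_n‖`. -/
theorem stmt16 (E : ℕ → Type*) [∀ n, NormedAddCommGroup (E n)]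
    [∀ n, NormedSpace ℝ (E n)]
    (x y : lp E 1) (hx : x ≠ 0) :
    BJOrth x y ↔
      ∃ f : ∀ n, E n →L[ℝ] ℝ,
        (∀ n, x n ≠ 0 → ‖f n‖ = 1 ∧ f n (x n) = ‖x n‖) ∧
        |∑' m : {n // x n ≠ 0}, f m (y m)| ≤ ∑' m : {n // x n = 0}, ‖y m‖ := by
  constructor
  · -- forward direction
    intro hBJ
    set S := ∑' m : {n // x n = 0}, ‖y m‖ with hSdef
    have hS0 : 0 ≤ S := tsum_nonneg fun m => norm_nonneg _
    have hDp : 0 ≤ ∑' n, Dp (x n) (y n) :=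
      sum_Dp_nonneg x y fun t _ => hBJ t
    have hDm : (∑' n, Dm (x n) (y n)) ≤ 0 := by
      have h0 : 0 ≤ ∑' n, Dp (x n) ((-y) n) := by
        refine sum_Dp_nonneg x (-y) fun t ht => ?_
        have h1 : x + t • (-y) = x + (-t) • y := by rw [smul_neg, ← neg_smul]
        rw [h1]; exact hBJ (-t)
      have h1 : ∀ n, Dp (x n) ((-y) n) = - Dm (x n) (y n) := by
        intro n
        have : (-y) n = -(y n) := by rw [lp.coeFn_neg]; rfl
        rw [this, Dm, neg_neg]
      rw [tsum_congr h1, tsum_neg] at h0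
      linarith
    -- split sums
    have splitDp := tsum_split _ (summable_Dp x y) (fun n => x n ≠ 0)
    have splitDm := tsum_split _ (summable_Dm x y) (fun n => x n ≠ 0)
    have hDp0 : (∑' m : {n // ¬ (x n ≠ 0)}, Dp (x m) (y m)) = S := by
      rw [tsum_not_ne x (fun n => Dp (x n) (y n))]
      exact tsum_congr fun m => by rw [m.2, Dp_zero]
    have hDm0 : (∑' m : {n // ¬ (x n ≠ 0)}, Dm (x m) (y m)) = -S := by
      rw [tsum_not_ne x (fun n => Dm (x n) (y n))]
      rw [hSdef, ← tsum_neg]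
      exact tsum_congr fun m => by rw [m.2, Dm_zero]
    set P₀ := ∑' m : {n // x n ≠ 0}, Dp (x m) (y m) with hP₀
    set M₀ := ∑' m : {n // x n ≠ 0}, Dm (x m) (y m) with hM₀
    have hPS : -S ≤ P₀ := by
      rw [splitDp, hDp0] at hDp; linarith
    have hMS : M₀ ≤ S := by
      rw [splitDm, hDm0] at hDm; linarith
    have hMP : M₀ ≤ P₀ := by
      refine Summable.tsum_le_tsum (fun m => Dm_le_Dp _ _) ?_ ?_
      · exact (summable_Dm x y).subtype _
      · exact (summable_Dp x y).subtype _
    set τ := max M₀ (-S) with hτ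
    have hτM : M₀ ≤ τ := le_max_left _ _
    have hτP : τ ≤ P₀ := max_le hMP hPS
    have hτabs : |τ| ≤ S := by
      rw [abs_le]
      exact ⟨le_max_right _ _, max_le hMS (by linarith)⟩
    -- choose θ and the values a n
    set θ := if M₀ < P₀ then (τ - M₀) / (P₀ - M₀) else 0 with hθdef
    have hθ0 : 0 ≤ θ := by
      rw [hθdef]; split_ifs with h
      · exact div_nonneg (by linarith) (by linarith)
      · exact le_refl 0
    have hθ1 : θ ≤ 1 := by
      rw [hθdef]; split_ifs with h
      · rw [div_le_one (by linarith)]; linarith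
      · norm_num
    have hθτ : (1 - θ) * M₀ + θ * P₀ = τ := by
      rw [hθdef]; split_ifs with h
      · have hpos : P₀ - M₀ ≠ 0 := ne_of_gt (by linarith)
        have hdm : (τ - M₀) / (P₀ - M₀) * (P₀ - M₀) = τ - M₀ := div_mul_cancel₀ _ hpos
        linear_combination hdm
      · have hPM : P₀ ≤ M₀ := not_lt.mp h
        have hτ' : τ = M₀ := le_antisymm (hτP.trans hPM) hτM
        rw [hτ']; ring
    set a : ℕ → ℝ := fun n => (1 - θ) * Dm (x n) (y n) + θ * Dp (x n) (y n) with ha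
    have ha1 : ∀ n, Dm (x n) (y n) ≤ a n := by
      intro n
      have h := Dm_le_Dp (x n) (y n)
      have h2 : 0 ≤ θ * (Dp (x n) (y n) - Dm (x n) (y n)) := mul_nonneg hθ0 (by linarith)
      simp only [ha]
      linarith
    have ha2 : ∀ n, a n ≤ Dp (x n) (y n) := by
      intro n
      have h := Dm_le_Dp (x n) (y n)
      have h2 : 0 ≤ (1 - θ) * (Dp (x n) (y n) - Dm (x n) (y n)) :=
        mul_nonneg (by linarith) (by linarith)
      simp only [ha]
      linarith
    have hasum : (∑' m : {n // x n ≠ 0}, a m) = τ := by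
      rw [ha]
      have s1 : Summable fun m : {n // x n ≠ 0} => (1 - θ) * Dm (x m) (y m) :=
        (((summable_Dm x y).subtype _).mul_left _)
      have s2 : Summable fun m : {n // x n ≠ 0} => θ * Dp (x m) (y m) :=
        (((summable_Dp x y).subtype _).mul_left _)
      rw [Summable.tsum_add s1 s2, tsum_mul_left, tsum_mul_left, ← hM₀, ← hP₀]
      exact hθτ
    -- choose the functionals
    have hch : ∀ n, ∃ g : E n →L[ℝ] ℝ,
        x n ≠ 0 → ‖g‖ = 1 ∧ g (x n) = ‖x n‖ ∧ g (y n) = a n := by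
      intro n
      by_cases hn : x n ≠ 0
      · obtain ⟨g, hg1, hg2, hg3⟩ := exists_support (x n) (y n) hn (a n)
          (fun t => norm_add_le_of_between _ _ (ha1 n) (ha2 n) t)
        exact ⟨g, fun _ => ⟨hg1, hg2, hg3⟩⟩
      · exact ⟨0, fun h => absurd h hn⟩
    choose f hf using hch
    refine ⟨f, fun n hn => ⟨(hf n hn).1, (hf n hn).2.1⟩, ?_⟩
    have : (∑' m : {n // x n ≠ 0}, f m (y m)) = τ := by
      rw [← hasum]
      exact tsum_congr fun m => (hf m m.2).2.2
    rw [this]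
    exact hτabs
  · -- backward direction
    rintro ⟨f, hf, hbound⟩ c
    rw [norm_eq x, norm_eq (x + c • y)]
    have hzc : ∀ n, ‖(x + c • y) n‖ = ‖x n + c • y n‖ := fun n => by
      rw [coords_add_smul]
    rw [tsum_congr hzc]
    have hc1 : Summable fun n => ‖x n + c • y n‖ := by
      have := summable_norm (x + c • y)
      simpa only [coords_add_smul] using this
    -- split both sides
    rw [tsum_split _ (summable_norm x) (fun n => x n ≠ 0),
      tsum_split _ hc1 (fun n => x n ≠ 0)]
    have hx0 : (∑' m : {n // ¬ (x n ≠ 0)}, ‖x m‖) = 0 := by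
      rw [tsum_not_ne x (fun n => ‖x n‖)]
      have : ∀ m : {n // x n = 0}, ‖x m‖ = 0 := fun m => by rw [m.2, norm_zero]
      rw [tsum_congr this, tsum_zero]
    set S := ∑' m : {n // x n = 0}, ‖y m‖ with hSdef
    have hS0 : 0 ≤ S := tsum_nonneg fun m => norm_nonneg _
    have hc0 : (∑' m : {n // ¬ (x n ≠ 0)}, ‖x m + c • y m‖) = |c| * S := by
      rw [tsum_not_ne x (fun n => ‖x n + c • y n‖)]
      have : ∀ m : {n // x n = 0}, ‖x m + c • y m‖ = |c| * ‖y m‖ := fun m => by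
        rw [m.2, zero_add, norm_smul, Real.norm_eq_abs]
      rw [tsum_congr this, tsum_mul_left]
    rw [hx0, hc0]
    -- pointwise bound on support part
    have hfy : Summable fun m : {n // x n ≠ 0} => f m (y m) := by
      refine ((summable_norm y).subtype {n | x n ≠ 0}).of_norm_bounded fun (m : {n // x n ≠ 0}) => ?_
      have h1 := (f m).le_opNorm (y m)
      rw [(hf m m.2).1, one_mul] at h1
      simpa [Real.norm_eq_abs] using h1
    set A := ∑' m : {n // x n ≠ 0}, f m (y m) with hA
    have hpoint : ∀ m : {n // x n ≠ 0},
        ‖x m‖ + c * f m (y m) ≤ ‖x m + c • y m‖ := by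
      intro m
      have h1 := (f m).le_opNorm (x m + c • y m)
      rw [(hf m m.2).1, one_mul] at h1
      have h2 : f m (x m + c • y m) = ‖x m‖ + c * f m (y m) := by
        rw [map_add, map_smul, (hf m m.2).2, smul_eq_mul]
      rw [Real.norm_eq_abs] at h1
      have := le_abs_self (f m (x m + c • y m))
      linarith [this.trans h1, h2 ▸ (this.trans h1)]
    have hsum_le : (∑' m : {n // x n ≠ 0}, ‖x m‖) + c * A ≤
        ∑' m : {n // x n ≠ 0}, ‖x m + c • y m‖ := by
      have hsx : Summable fun m : {n // x n ≠ 0} => ‖x m‖ :=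
        (summable_norm x).subtype _
      have s1 : Summable fun m : {n // x n ≠ 0} => ‖x m‖ + c * f m (y m) :=
        hsx.add (hfy.mul_left c)
      have s2 : Summable fun m : {n // x n ≠ 0} => ‖x m + c • y m‖ :=
        hc1.subtype _
      have hle := Summable.tsum_le_tsum hpoint s1 s2
      rwa [Summable.tsum_add hsx (hfy.mul_left c), tsum_mul_left, ← hA] at hle
    have hcA : -( |c| * S) ≤ c * A := by
      have h1 : |c * A| ≤ |c| * S := by
        rw [abs_mul]
        exact mul_le_mul_of_nonneg_left hbound (abs_nonneg c)
      linarith [neg_abs_le (c * A)]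
    linarith
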